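/- Let G ≤ Π_n be any symmetry group. Then the set of A ∈ V(G) for which there exist indices i, j lying in different G-orbits with s_i(A) = s_j(A) has μ_G-measure zero; i.e., for almost every A ∈ 𝒜(G) the vector s(A) = A·1 is discriminative. -/

import Mathlib

/- Setting: graphs are symmetric real n×n matrices. `pm n σ` is the permutation
matrix of `σ` (entry (i,j) equals 1 iff σ j = i, so it "sends j to σ j").
`DS n` is the set of doubly stochastic matrices, `Aut A` the set of permutation
matrices commuting with `A`, `AutConv A` its doubly stochastic relaxation.
`Vset G`, `AcalA G` and `muG G` are V(G), 𝒜(G) and the Hausdorff measure μ_G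
(of dimension d = dim V(G), w.r.t. the Frobenius/Euclidean norm) restricted to V(G). -/

open Matrix MeasureTheory Finset

noncomputable section

def pm (n : ℕ) (σ : Equiv.Perm (Fin n)) : Matrix (Fin n) (Fin n) ℝ :=
  Matrix.of fun i j => if σ j = i then (1 : ℝ) else 0

def IsPermMatrix {n : ℕ} (P : Matrix (Fin n) (Fin n) ℝ) : Prop :=
  ∃ σ : Equiv.Perm (Fin n), P = pm n σ

def DS (n : ℕ) : Set (Matrix (Fin n) (Fin n) ℝ) :=
  {S | (∀ i j, 0 ≤ S i j) ∧ (∀ i, ∑ j, S i j = 1) ∧ (∀ j, ∑ i, S i j = 1)}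

def Aut {n : ℕ} (A : Matrix (Fin n) (Fin n) ℝ) : Set (Matrix (Fin n) (Fin n) ℝ) :=
  {P | IsPermMatrix P ∧ A * P = P * A}

def AutConv {n : ℕ} (A : Matrix (Fin n) (Fin n) ℝ) : Set (Matrix (Fin n) (Fin n) ℝ) :=
  {S | S ∈ DS n ∧ A * S = S * A}

/-- `DS(A)` is convex exact: the doubly stochastic commutants of `A` are exactly the
convex combinations of the permutation matrices commuting with `A`. -/
def ConvexExact {n : ℕ} (A : Matrix (Fin n) (Fin n) ℝ) : Prop :=
  AutConv A = convexHull ℝ (Aut A)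

/-- The subgroup `G` of permutations, realized as a set of permutation matrices. -/
def matSet {n : ℕ} (G : Subgroup (Equiv.Perm (Fin n))) : Set (Matrix (Fin n) (Fin n) ℝ) :=
  (pm n) '' (G : Set (Equiv.Perm (Fin n)))

/-- `V(G)`: symmetric matrices invariant under conjugation by all elements of `G`. -/
def Vset {n : ℕ} (G : Subgroup (Equiv.Perm (Fin n))) : Set (Matrix (Fin n) (Fin n) ℝ) :=
  {A | A.IsSymm ∧ ∀ σ ∈ G, (pm n σ)ᵀ * A * pm n σ = A}

/-- `𝒜(G)`: symmetric matrices whose automorphism group is exactly `G`. -/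
def AcalA {n : ℕ} (G : Subgroup (Equiv.Perm (Fin n))) : Set (Matrix (Fin n) (Fin n) ℝ) :=
  {A | A.IsSymm ∧ Aut A = matSet G}

attribute [local instance] Matrix.frobeniusNormedAddCommGroup

instance matMeasurableSpace {m k : Type*} [Fintype m] [Fintype k] :
    MeasurableSpace (Matrix m k ℝ) := borel _

instance matBorelSpace {m k : Type*} [Fintype m] [Fintype k] :
    BorelSpace (Matrix m k ℝ) := ⟨rfl⟩

/-- `μ_G`: the `dim V(G)`-dimensional Hausdorff measure restricted to `V(G)`. -/
def muG {n : ℕ} (G : Subgroup (Equiv.Perm (Fin n))) : Measure (Matrix (Fin n) (Fin n) ℝ) :=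
  (@Measure.hausdorffMeasure _ _ _ matBorelSpace (Module.finrank ℝ ↥(Submodule.span ℝ (Vset G)) : ℝ)).restrict (Vset G)

/-- `s(A) = A·1`, the vector of row sums of `A`. -/
def sVec {n : ℕ} (A : Matrix (Fin n) (Fin n) ℝ) : Fin n → ℝ := A *ᵥ 1

attribute [local instance] Matrix.frobeniusNormedSpace

section aux
variable {n : ℕ}

/-- The row-sum-difference linear functional. -/
def rsd (n : ℕ) (i j : Fin n) : Matrix (Fin n) (Fin n) ℝ →ₗ[ℝ] ℝ where
  toFun A := (∑ l, A i l) - ∑ l, A j l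
  map_add' A B := by simp [Finset.sum_add_distrib]; ring
  map_smul' c A := by simp [Finset.mul_sum, mul_sub]

lemma pm_conj_apply (σ : Equiv.Perm (Fin n)) (A : Matrix (Fin n) (Fin n) ℝ) (k l : Fin n) :
    ((pm n σ)ᵀ * A * pm n σ) k l = A (σ k) (σ l) := by
  simp only [Matrix.mul_apply, Matrix.transpose_apply, pm, Matrix.of_apply, ite_mul, mul_ite,
    one_mul, mul_one, zero_mul, mul_zero, Finset.sum_ite_eq, Finset.sum_ite_eq',
    Finset.mem_univ, if_true]

open Classical in
/-- The orbit-indicator diagonal witness matrix. -/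
def wit (G : Subgroup (Equiv.Perm (Fin n))) (i : Fin n) : Matrix (Fin n) (Fin n) ℝ :=
  Matrix.of fun k l => if k = l ∧ ∃ σ ∈ G, σ i = k then 1 else 0

lemma wit_mem (G : Subgroup (Equiv.Perm (Fin n))) (i : Fin n) : wit G i ∈ Vset G := by
  classical
  constructor
  · ext k l
    simp only [Matrix.transpose_apply, wit, Matrix.of_apply]
    by_cases h : k = l
    · subst h; rfl
    · simp [h, Ne.symm h]
  · intro σ hσ
    ext k l
    rw [pm_conj_apply]
    simp only [wit, Matrix.of_apply]
    refine if_congr ?_ rfl rfl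
    constructor
    · rintro ⟨h1, τ, hτ, h2⟩
      refine ⟨σ.injective h1, σ⁻¹ * τ, G.mul_mem (G.inv_mem hσ) hτ, ?_⟩
      simp [Equiv.Perm.mul_apply, h2]
    · rintro ⟨h1, τ, hτ, h2⟩
      refine ⟨congrArg σ h1, σ * τ, G.mul_mem hσ hτ, ?_⟩
      simp [Equiv.Perm.mul_apply, h2]

lemma rsd_wit (G : Subgroup (Equiv.Perm (Fin n))) (i j : Fin n)
    (h : ¬ ∃ σ ∈ G, σ j = i) : rsd n i j (wit G i) = 1 := by
  have h1 : (∑ l, wit G i i l) = 1 := by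
    rw [Finset.sum_eq_single i]
    · simp only [wit, Matrix.of_apply, if_pos]
      rw [if_pos ⟨rfl, 1, G.one_mem, rfl⟩]
    · intro b _ hb
      simp only [wit, Matrix.of_apply, ite_eq_right_iff]
      rintro ⟨rfl, -⟩; exact absurd rfl hb
    · simp
  have h2 : (∑ l, wit G i j l) = 0 := by
    apply Finset.sum_eq_zero
    intro l _
    simp only [wit, Matrix.of_apply, ite_eq_right_iff]
    rintro ⟨rfl, σ, hσ, h2⟩
    exact absurd ⟨σ⁻¹, G.inv_mem hσ, by simp [← h2]⟩ h
  simp [rsd, h1, h2]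

lemma submodule_dimH_le (U : Submodule ℝ (Matrix (Fin n) (Fin n) ℝ)) :
    dimH (U : Set (Matrix (Fin n) (Fin n) ℝ)) ≤ Module.finrank ℝ ↥U := by
  have h : (U : Set (Matrix (Fin n) (Fin n) ℝ)) = Set.range U.subtype := by
    simp [Submodule.range_subtype]
  rw [h]
  exact ContDiff.dimH_range_le (U.subtype.toContinuousLinearMap.contDiff)

end aux

/-- for any symmetry group `G`, the set of `A ∈ V(G)` for which `s(A)` fails
to be discriminative (two indices in different G-orbits share the same row sum) has
μ_G-measure zero; hence `s(A)` is discriminative for almost every `A ∈ 𝒜(G)`. -/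
theorem stmt4 {n : ℕ} (G : Subgroup (Equiv.Perm (Fin n)))
    (hsym : (AcalA G).Nonempty) :
    muG G {A | A ∈ Vset G ∧
      ∃ i j : Fin n, (¬ ∃ σ ∈ G, σ j = i) ∧ sVec A i = sVec A j} = 0 := by
  set E := Matrix (Fin n) (Fin n) ℝ
  set W : Submodule ℝ E := Submodule.span ℝ (Vset G) with hW
  -- reduce to the full Hausdorff measure
  suffices h0 : @Measure.hausdorffMeasure _ _ _ matBorelSpace (Module.finrank ℝ ↥W : ℝ) {A : E | A ∈ Vset G ∧
      ∃ i j : Fin n, (¬ ∃ σ ∈ G, σ j = i) ∧ sVec A i = sVec A j} = 0 by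
    rw [muG]
    exact Measure.absolutelyContinuous_of_le Measure.restrict_le_self h0
  -- cover by the pairwise bad sets
  have hsub : {A : E | A ∈ Vset G ∧
      ∃ i j : Fin n, (¬ ∃ σ ∈ G, σ j = i) ∧ sVec A i = sVec A j} ⊆
      ⋃ i : Fin n, ⋃ j : Fin n,
        {A : E | A ∈ Vset G ∧ (¬ ∃ σ ∈ G, σ j = i) ∧ sVec A i = sVec A j} := by
    rintro A ⟨hA, i, j, hij, hs⟩
    exact Set.mem_iUnion.2 ⟨i, Set.mem_iUnion.2 ⟨j, hA, hij, hs⟩⟩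
  refine measure_mono_null hsub (measure_iUnion_null fun i => measure_iUnion_null fun j => ?_)
  by_cases hij : ∃ σ ∈ G, σ j = i
  · convert measure_empty (μ := @Measure.hausdorffMeasure E _ _ matBorelSpace (Module.finrank ℝ ↥W : ℝ))
    ext A
    simp only [Set.mem_setOf_eq, Set.mem_empty_iff_false, iff_false]
    rintro ⟨-, h, -⟩
    exact h hij
  · -- the bad set lies in a proper subspace of W
    set U : Submodule ℝ E := W ⊓ LinearMap.ker (rsd n i j) with hU
    have hUW : U < W := by
      refine lt_of_le_of_ne inf_le_left (fun h => ?_)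
      have hw : wit G i ∈ U := h ▸ Submodule.subset_span (wit_mem G i)
      have hk : rsd n i j (wit G i) = 0 :=
        LinearMap.mem_ker.mp (Submodule.mem_inf.mp hw).2
      rw [rsd_wit G i j hij] at hk
      exact one_ne_zero hk
    have hrank : Module.finrank ℝ ↥U < Module.finrank ℝ ↥W :=
      Submodule.finrank_lt_finrank_of_lt hUW
    have hsub2 : {A : E | A ∈ Vset G ∧ (¬ ∃ σ ∈ G, σ j = i) ∧ sVec A i = sVec A j} ⊆
        (U : Set E) := by
      rintro A ⟨hA, -, hs⟩
      refine Submodule.mem_inf.mpr ⟨Submodule.subset_span hA, LinearMap.mem_ker.mpr ?_⟩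
      have e1 : sVec A i = ∑ l, A i l := by
        simp [sVec, Matrix.mulVec, dotProduct]
      have e2 : sVec A j = ∑ l, A j l := by
        simp [sVec, Matrix.mulVec, dotProduct]
      show (∑ l, A i l) - ∑ l, A j l = 0
      rw [← e1, ← e2, hs, sub_self]
    refine measure_mono_null hsub2 ?_
    have hcast : ((Module.finrank ℝ ↥W : NNReal) : ℝ) = (Module.finrank ℝ ↥W : ℝ) := by
      norm_cast
    rw [← hcast]
    apply @hausdorffMeasure_of_dimH_lt _ _ _ matBorelSpace
    calc dimH (U : Set E) ≤ (Module.finrank ℝ ↥U : ENNReal) := submodule_dimH_le U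
      _ < ((Module.finrank ℝ ↥W : NNReal) : ENNReal) := by exact_mod_cast hrank
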